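/- Let E ⊆ ℝ^{n+1} (n ≥ 2) be an n-dimensional Ahlfors–David regular set with dyadic system 𝔻(E), and suppose E satisfies the WHSA property with parameters K₀ and ε₀ ≪ K₀^{-6}. Then for every 0 < ε < ε₀, the collection ℬ of cubes Q ∈ 𝔻(E) for which the √ε-local BAUP condition fails satisfies the packing condition ∑_{Q⊆Q₀, Q∈ℬ} σ(Q) ≤ C(ε) σ(Q₀) for every Q₀ ∈ 𝔻(E), where C(ε) depends only on n, the ADR and dyadic constants, K₀, ε and the WHSA packing constants. In particular, E satisfies the BAUP condition. -/

import Mathlib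

open MeasureTheory Metric Set
open scoped ENNReal NNReal InnerProductSpace

noncomputable section

abbrev ES (n : ℕ) : Type := EuclideanSpace ℝ (Fin (n + 1))

/-- The surface measure `σ = H^n|_E`. -/
def surfMeasure (n : ℕ) (E : Set (ES n)) : Measure (ES n) :=
  (μH[(n : ℝ)]).restrict E

/-- `E ⊆ ℝ^{n+1}` is `n`-dimensional Ahlfors–David regular with constant `C`. -/
def IsADR (n : ℕ) (C : ℝ) (E : Set (ES n)) : Prop :=
  IsClosed E ∧ 1 ≤ C ∧
    ∀ x ∈ E, ∀ r : ℝ, 0 < r → ENNReal.ofReal r < EMetric.diam E →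
      ENNReal.ofReal (C⁻¹ * r ^ n) ≤ μH[(n : ℝ)] (E ∩ ball x r) ∧
      μH[(n : ℝ)] (E ∩ ball x r) ≤ ENNReal.ofReal (C * r ^ n)

/-- A Christ–David–Semmes dyadic system on `E`. -/
structure DyadicSystem (n : ℕ) (E : Set (ES n)) where
  cubes : ℤ → Set (Set (ES n))
  center : Set (ES n) → ES n
  a₀ : ℝ
  γ : ℝ
  Cstar : ℝ
  a₀_pos : 0 < a₀
  γ_pos : 0 < γ
  Cstar_pos : 0 < Cstar
  borel : ∀ k : ℤ, ∀ Q ∈ cubes k, MeasurableSet Q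
  cover : ∀ k : ℤ, ⋃₀ cubes k = E
  nested : ∀ k m : ℤ, k ≤ m → ∀ Q ∈ cubes m, ∀ Q' ∈ cubes k, Q ⊆ Q' ∨ Q ∩ Q' = ∅
  parent : ∀ k : ℤ, ∀ Q ∈ cubes k, ∀ m : ℤ, m < k → ∃! Q', Q' ∈ cubes m ∧ Q ⊆ Q'
  diam_le : ∀ k : ℤ, ∀ Q ∈ cubes k, EMetric.diam Q ≤ ENNReal.ofReal (Cstar * 2 ^ (-k))
  center_mem : ∀ k : ℤ, ∀ Q ∈ cubes k, center Q ∈ Q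
  contains_ball : ∀ k : ℤ, ∀ Q ∈ cubes k, E ∩ ball (center Q) (a₀ * 2 ^ (-k)) ⊆ Q
  small_boundary : ∀ k : ℤ, ∀ Q ∈ cubes k, ∀ ϱ : ℝ, 0 < ϱ → ϱ < a₀ →
    μH[(n : ℝ)] {x ∈ Q | Metric.infDist x (E \ Q) ≤ ϱ * 2 ^ (-k)} ≤
      ENNReal.ofReal (Cstar * ϱ ^ γ) * μH[(n : ℝ)] Q

/-- Uniform rectifiability: big pieces of Lipschitz images. -/
def IsUR (n : ℕ) (θ M₀ : ℝ) (E : Set (ES n)) : Prop :=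
  0 < θ ∧ 0 < M₀ ∧
    ∀ x ∈ E, ∀ r : ℝ, 0 < r → ENNReal.ofReal r < EMetric.diam E →
      ∃ ρ : EuclideanSpace ℝ (Fin n) → ES n,
        LipschitzWith M₀.toNNReal ρ ∧
        ENNReal.ofReal (θ * r ^ n) ≤ μH[(n : ℝ)] (E ∩ ball x r ∩ ρ '' ball 0 r)

/-- `P` is an affine hyperplane of `ℝ^{n+1}`. -/
def IsHyperplane {n : ℕ} (P : Set (ES n)) : Prop :=
  ∃ (ν : ES n) (c : ℝ), ‖ν‖ = 1 ∧ P = {Z | ⟪ν, Z⟫_ℝ = c}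

/-- `H` is an open half-space with boundary hyperplane `P`. -/
def IsHalfSpacePair {n : ℕ} (H P : Set (ES n)) : Prop :=
  ∃ (ν : ES n) (c : ℝ), ‖ν‖ = 1 ∧ H = {Z | c < ⟪ν, Z⟫_ℝ} ∧ P = {Z | ⟪ν, Z⟫_ℝ = c}

/-- The `ε`-local BAUP condition for a cube `Q` of generation `k`. -/
def LocalBAUP {n : ℕ} (E : Set (ES n)) (D : DyadicSystem n E) (ε : ℝ) (k : ℤ)
    (Q : Set (ES n)) : Prop :=
  ∃ Ps : Set (Set (ES n)), Ps.Nonempty ∧ (∀ P ∈ Ps, IsHyperplane P) ∧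
    (∀ y ∈ E ∩ ball (D.center Q) (10 * Metric.diam Q),
      Metric.infDist y (⋃₀ Ps) ≤ ε * 2 ^ (-k)) ∧
    (∀ z ∈ (⋃₀ Ps) ∩ ball (D.center Q) (10 * Metric.diam Q),
      Metric.infDist z E ≤ ε * 2 ^ (-k))

/-- The `ε`-local WHSA condition with parameter `K₀` for a cube `Q` of generation `k`. -/
def LocalWHSA {n : ℕ} (E : Set (ES n)) (D : DyadicSystem n E) (K₀ ε : ℝ) (k : ℤ)
    (Q : Set (ES n)) : Prop :=
  ∃ Hs P : Set (ES n), IsHalfSpacePair Hs P ∧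
    (∀ Z ∈ P ∩ ball (D.center Q) (ε ^ (-2 : ℤ) * 2 ^ (-k)),
      Metric.infDist Z E ≤ ε * 2 ^ (-k)) ∧
    (∃ z ∈ closure Q, Metric.infDist z P ≤ K₀ ^ ((3 : ℝ) / 2) * 2 ^ (-k)) ∧
    Hs ∩ ball (D.center Q) (ε ^ (-2 : ℤ) * 2 ^ (-k)) ∩ E = ∅

/-- The family of (generations of) cubes `B` satisfies a Carleson packing condition with
constant `C`. -/
def PackedBy {n : ℕ} (E : Set (ES n)) (D : DyadicSystem n E)
    (B : ℤ → Set (ES n) → Prop) (C : ℝ) : Prop :=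
  ∀ k₀ : ℤ, ∀ Q₀ ∈ D.cubes k₀,
    ∑' p : {p : ℤ × Set (ES n) // p.2 ∈ D.cubes p.1 ∧ B p.1 p.2 ∧ p.2 ⊆ Q₀},
      μH[(n : ℝ)] p.1.2 ≤ ENNReal.ofReal C * μH[(n : ℝ)] Q₀

/-- Harmonic: `C²` with vanishing Laplacian. -/
def HarmonicOn {n : ℕ} (u : ES n → ℝ) (U : Set (ES n)) : Prop :=
  ContDiffOn ℝ 2 u U ∧ ∀ x ∈ U,
    ∑ i : Fin (n + 1),
      fderiv ℝ (fun y => fderiv ℝ u y (EuclideanSpace.single i 1)) x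
        (EuclideanSpace.single i 1) = 0

namespace WBaux

variable {n : ℕ} {E : Set (ES n)}

lemma two_zpow_pos (k : ℤ) : (0:ℝ) < 2 ^ k := zpow_pos (by norm_num) k

lemma cube_subset (D : DyadicSystem n E) {k : ℤ} {Q : Set (ES n)} (h : Q ∈ D.cubes k) :
    Q ⊆ E := by
  conv_rhs => rw [← D.cover k]
  exact Set.subset_sUnion_of_mem h

lemma center_mem_E (D : DyadicSystem n E) {k : ℤ} {Q : Set (ES n)} (h : Q ∈ D.cubes k) :
    D.center Q ∈ E := cube_subset D h (D.center_mem k Q h)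

lemma diam_le' (D : DyadicSystem n E) {k : ℤ} {Q : Set (ES n)} (h : Q ∈ D.cubes k) :
    Metric.diam Q ≤ D.Cstar * 2 ^ (-k) := by
  have h2 : (0:ℝ) ≤ D.Cstar * 2 ^ (-k) := le_of_lt (mul_pos D.Cstar_pos (two_zpow_pos _))
  have h3 := ENNReal.toReal_mono ENNReal.ofReal_ne_top (D.diam_le k Q h)
  rwa [ENNReal.toReal_ofReal h2] at h3

lemma cube_bounded (D : DyadicSystem n E) {k : ℤ} {Q : Set (ES n)} (h : Q ∈ D.cubes k) :
    Bornology.IsBounded Q := by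
  rw [Metric.isBounded_iff_ediam_ne_top]
  exact ne_top_of_le_ne_top ENNReal.ofReal_ne_top (D.diam_le k Q h)

lemma cube_subset_ball (D : DyadicSystem n E) {k : ℤ} {Q : Set (ES n)} (h : Q ∈ D.cubes k) :
    Q ⊆ ball (D.center Q) ((D.Cstar + 1) * 2 ^ (-k)) := by
  intro y hy
  have h1 := Metric.dist_le_diam_of_mem (cube_bounded D h) hy (D.center_mem k Q h)
  have h2 : dist y (D.center Q) ≤ D.Cstar * 2 ^ (-k) := h1.trans (diam_le' D h)
  have hlt : D.Cstar * 2 ^ (-k) < (D.Cstar + 1) * 2 ^ (-k) :=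
    mul_lt_mul_of_pos_right (by linarith) (two_zpow_pos _)
  exact mem_ball.2 (lt_of_le_of_lt h2 hlt)

lemma global_bound {C_ADR : ℝ} (hE : IsADR n C_ADR E) (hn : 1 ≤ n)
    (h0 : EMetric.diam E ≠ ⊤) :
    ∃ Kg : ℝ, 0 ≤ Kg ∧ μH[(n:ℝ)] E ≤ ENNReal.ofReal (Kg * (EMetric.diam E).toReal ^ n) := by
  set d := (EMetric.diam E).toReal with hd
  rcases eq_or_lt_of_le (ENNReal.toReal_nonneg : 0 ≤ d) with h | hdpos
  · -- diameter zero: E subsingleton, measure zero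
    refine ⟨0, le_rfl, ?_⟩
    have hsub : E.Subsingleton := by
      rw [← EMetric.diam_eq_zero_iff]
      rcases (ENNReal.toReal_eq_zero_iff (EMetric.diam E)).1 h.symm with h1 | h1
      · exact h1
      · exact absurd h1 h0
    have : μH[(n:ℝ)] E = 0 := by
      rcases Set.Subsingleton.eq_empty_or_singleton hsub with h1 | ⟨x, h1⟩
      · simp [h1]
      · rw [h1]
        have : dimH ({x} : Set (ES n)) < ((n : ℝ≥0) : ℝ≥0∞) := by
          rw [dimH_subsingleton (Set.subsingleton_singleton)]
          exact_mod_cast (by exact_mod_cast Nat.lt_of_lt_of_le Nat.zero_lt_one hn : (0:ℝ≥0) < (n:ℝ≥0))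
        have := hausdorffMeasure_of_dimH_lt this
        simpa using this
    simp [this]
  · -- E compact, cover by finitely many balls of radius d/2
    have hcomp : IsCompact E :=
      Metric.isCompact_of_isClosed_isBounded hE.1 (Metric.isBounded_iff_ediam_ne_top.2 h0)
    obtain ⟨t, hts, htfin, htcov⟩ := hcomp.finite_cover_balls (show 0 < d/2 by linarith)
    have hC : (0:ℝ) ≤ C_ADR := le_trans zero_le_one hE.2.1
    refine ⟨htfin.toFinset.card * C_ADR / 2 ^ n, by positivity, ?_⟩
    have hsub : E ⊆ ⋃ x ∈ htfin.toFinset, E ∩ ball x (d/2) := by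
      intro y hy
      obtain ⟨x, hx1, hx2⟩ := Set.mem_iUnion₂.1 (htcov hy)
      exact Set.mem_iUnion₂.2 ⟨x, htfin.mem_toFinset.2 hx1, hy, hx2⟩
    have hballs : ∀ x ∈ htfin.toFinset, μH[(n:ℝ)] (E ∩ ball x (d/2)) ≤
        ENNReal.ofReal (C_ADR * (d/2) ^ n) := by
      intro x hx
      have hxE : x ∈ E := hts (htfin.mem_toFinset.1 hx)
      have hlt : ENNReal.ofReal (d/2) < EMetric.diam E := by
        rw [← ENNReal.ofReal_toReal h0, ← hd]
        exact (ENNReal.ofReal_lt_ofReal_iff hdpos).2 (by linarith)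
      exact (hE.2.2 x hxE (d/2) (by linarith) hlt).2
    calc μH[(n:ℝ)] E ≤ μH[(n:ℝ)] (⋃ x ∈ htfin.toFinset, E ∩ ball x (d/2)) :=
          measure_mono hsub
      _ ≤ ∑ x ∈ htfin.toFinset, μH[(n:ℝ)] (E ∩ ball x (d/2)) := measure_biUnion_finset_le _ _
      _ ≤ ∑ _x ∈ htfin.toFinset, ENNReal.ofReal (C_ADR * (d/2) ^ n) :=
          Finset.sum_le_sum hballs
      _ = htfin.toFinset.card * ENNReal.ofReal (C_ADR * (d/2) ^ n) := by
          rw [Finset.sum_const, nsmul_eq_mul]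
      _ ≤ ENNReal.ofReal (htfin.toFinset.card * C_ADR / 2 ^ n * d ^ n) := by
          rw [← ENNReal.ofReal_natCast (htfin.toFinset.card), ← ENNReal.ofReal_mul (by positivity)]
          exact ENNReal.ofReal_le_ofReal (le_of_eq (by rw [div_pow]; ring))

lemma measure_ball_upper {C_ADR Kg : ℝ} (hE : IsADR n C_ADR E) (hKg : 0 ≤ Kg)
    (hg : EMetric.diam E ≠ ⊤ →
      μH[(n:ℝ)] E ≤ ENNReal.ofReal (Kg * (EMetric.diam E).toReal ^ n))
    {x : ES n} (hx : x ∈ E) {r : ℝ} (hr : 0 < r) :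
    μH[(n:ℝ)] (E ∩ ball x r) ≤ ENNReal.ofReal ((C_ADR + Kg) * r ^ n) := by
  rcases lt_or_ge (ENNReal.ofReal r) (EMetric.diam E) with h | h
  · refine le_trans (hE.2.2 x hx r hr h).2 (ENNReal.ofReal_le_ofReal ?_)
    have : (0:ℝ) ≤ r ^ n := by positivity
    nlinarith
  · have hfin : EMetric.diam E ≠ ⊤ := ne_top_of_le_ne_top ENNReal.ofReal_ne_top h
    have htd : (EMetric.diam E).toReal ≤ r := by
      have h2 := ENNReal.toReal_mono ENNReal.ofReal_ne_top h
      rwa [ENNReal.toReal_ofReal hr.le] at h2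
    have h1 : μH[(n:ℝ)] (E ∩ ball x r) ≤ μH[(n:ℝ)] E := measure_mono Set.inter_subset_left
    refine h1.trans ((hg hfin).trans (ENNReal.ofReal_le_ofReal ?_))
    have h2 : (EMetric.diam E).toReal ^ n ≤ r ^ n :=
      pow_le_pow_left₀ ENNReal.toReal_nonneg htd n
    have hC : (1:ℝ) ≤ C_ADR := hE.2.1
    have h3 : (0:ℝ) ≤ r ^ n := by positivity
    nlinarith

lemma cube_lower {C_ADR : ℝ} (hE : IsADR n C_ADR E) (D : DyadicSystem n E) {j : ℤ}
    (hj : ENNReal.ofReal (D.a₀ * 2 ^ (-j) / 2) < EMetric.diam E)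
    {Q : Set (ES n)} (hQ : Q ∈ D.cubes j) :
    ENNReal.ofReal (C_ADR⁻¹ * (D.a₀/2) ^ n * ((2:ℝ) ^ (-j)) ^ n) ≤ μH[(n:ℝ)] Q := by
  have ha := D.a₀_pos
  have hs := two_zpow_pos (-j)
  have hrpos : 0 < D.a₀ * 2 ^ (-j) / 2 := by positivity
  have hlow := (hE.2.2 (D.center Q) (center_mem_E D hQ) _ hrpos hj).1
  have hsub : E ∩ ball (D.center Q) (D.a₀ * 2 ^ (-j) / 2) ⊆ Q :=
    subset_trans (Set.inter_subset_inter_right _ (ball_subset_ball (by linarith)))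
      (D.contains_ball j Q hQ)
  refine le_trans (le_of_eq ?_) (hlow.trans (measure_mono hsub))
  congr 1
  rw [mul_assoc, ← mul_pow]
  ring_nf

lemma cube_eq_E (D : DyadicSystem n E) {j : ℤ}
    (hj : EMetric.diam E ≤ ENNReal.ofReal (D.a₀ * 2 ^ (-j) / 2))
    {Q : Set (ES n)} (hQ : Q ∈ D.cubes j) : Q = E := by
  have ha := D.a₀_pos
  have hs := two_zpow_pos (-j)
  refine subset_antisymm (cube_subset D hQ) ?_
  intro y hy
  apply D.contains_ball j Q hQ
  refine ⟨hy, ?_⟩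
  have h1 : edist y (D.center Q) ≤ EMetric.diam E :=
    EMetric.edist_le_diam_of_mem hy (center_mem_E D hQ)
  have h2 : edist y (D.center Q) ≤ ENNReal.ofReal (D.a₀ * 2 ^ (-j) / 2) := h1.trans hj
  rw [edist_dist] at h2
  have h3 : dist y (D.center Q) ≤ D.a₀ * 2 ^ (-j) / 2 :=
    (ENNReal.ofReal_le_ofReal_iff (by positivity)).1 h2
  rw [mem_ball]
  calc dist y (D.center Q) ≤ D.a₀ * 2 ^ (-j) / 2 := h3
    _ < D.a₀ * 2 ^ (-j) := by linarith [mul_pos ha hs]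

lemma shell {C_ADR : ℝ} (hE : IsADR n C_ADR E) (D : DyadicSystem n E) {k : ℤ}
    (hk : ENNReal.ofReal (D.a₀ * 2 ^ (-(k+1)) / 2) < EMetric.diam E)
    {Q Q' : Set (ES n)} (hQ : Q ∈ D.cubes k) (hQ' : Q' ∈ D.cubes k) (hss : Q ⊂ Q') :
    μH[(n:ℝ)] Q + ENNReal.ofReal (C_ADR⁻¹ * (D.a₀/2) ^ n * ((2:ℝ) ^ (-(k+1):ℤ)) ^ n)
      ≤ μH[(n:ℝ)] Q' := by
  obtain ⟨y, hyQ', hyQ⟩ := Set.exists_of_ssubset hss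
  have hyE : y ∈ E := cube_subset D hQ' hyQ'
  obtain ⟨Q'', hQ''mem, hyQ''⟩ : ∃ Q'' ∈ D.cubes (k+1), y ∈ Q'' := by
    have h1 : y ∈ ⋃₀ D.cubes (k+1) := by rw [D.cover]; exact hyE
    simpa [Set.mem_sUnion] using h1
  have h1 : Q'' ⊆ Q' := by
    rcases D.nested k (k+1) (by omega) Q'' hQ''mem Q' hQ' with h | h
    · exact h
    · exact absurd (Set.mem_inter hyQ'' hyQ') (by rw [h]; exact Set.notMem_empty y)
  have h2 : Q'' ∩ Q = ∅ := by
    rcases D.nested k (k+1) (by omega) Q'' hQ''mem Q hQ with h | h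
    · exact absurd (h hyQ'') hyQ
    · exact h
  have hdisj : Disjoint Q Q'' := by
    rw [Set.disjoint_iff_inter_eq_empty, Set.inter_comm]; exact h2
  have hlow := cube_lower hE D hk hQ''mem
  calc μH[(n:ℝ)] Q + ENNReal.ofReal (C_ADR⁻¹ * (D.a₀/2) ^ n * ((2:ℝ) ^ (-(k+1):ℤ)) ^ n)
      ≤ μH[(n:ℝ)] Q + μH[(n:ℝ)] Q'' := add_le_add le_rfl hlow
    _ = μH[(n:ℝ)] (Q ∪ Q'') := (measure_union hdisj (D.borel _ _ hQ''mem)).symm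
    _ ≤ μH[(n:ℝ)] Q' := measure_mono (Set.union_subset hss.subset h1)

lemma multiplicity {C_ADR Kg : ℝ} (hE : IsADR n C_ADR E) (D : DyadicSystem n E)
    (hKg : 0 ≤ Kg)
    (hg : EMetric.diam E ≠ ⊤ →
      μH[(n:ℝ)] E ≤ ENNReal.ofReal (Kg * (EMetric.diam E).toReal ^ n))
    {L' : ℝ} (hL' : 1 ≤ L') :
    ∃ N : ℕ, 0 < N ∧ ∀ (k : ℤ) (z : ES n), z ∈ E →
      ∀ G : Finset (Set (ES n)),
        (∀ Q ∈ G, Q ∈ D.cubes k ∧ dist (D.center Q) z ≤ L' * 2 ^ (-k)) →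
        G.card ≤ N := by
  classical
  have hC1 : (1:ℝ) ≤ C_ADR := hE.2.1
  have hC0 : (0:ℝ) < C_ADR := lt_of_lt_of_le zero_lt_one hC1
  have ha := D.a₀_pos
  have hCs := D.Cstar_pos
  set CL : ℝ := C_ADR⁻¹ * (D.a₀/2) ^ n with hCL
  have hCLpos : 0 < CL := by positivity
  set CL2 : ℝ := CL * (1/2) ^ n with hCL2
  have hCL2pos : 0 < CL2 := by positivity
  set CU : ℝ := (C_ADR + Kg) * (L' + D.Cstar + 1) ^ n with hCU
  have hCUpos : 0 < CU := by positivity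
  set Rb : ℕ := Nat.floor (CU / CL2) with hRb
  set N₂ : ℕ := Nat.floor (CU / CL) + 1 with hN₂
  refine ⟨(Rb + 1) * N₂ + 1, by positivity, ?_⟩
  intro k z hz G hG
  set s : ℝ := (2:ℝ) ^ (-k) with hs
  have hspos : 0 < s := two_zpow_pos _
  by_cases hdc : EMetric.diam E ≤ ENNReal.ofReal (D.a₀ * 2 ^ (-k) / 2)
  · -- all cubes equal E
    have : G.card ≤ 1 := Finset.card_le_one.2 (fun a ha' b hb' => by
      rw [cube_eq_E D hdc (hG a ha').1, cube_eq_E D hdc (hG b hb').1])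
    omega
  · push_neg at hdc
    -- shell bound hypothesis at generation k+1
    have hk1 : ENNReal.ofReal (D.a₀ * 2 ^ (-(k+1)) / 2) < EMetric.diam E := by
      refine lt_of_le_of_lt (ENNReal.ofReal_le_ofReal ?_) hdc
      have : (2:ℝ) ^ (-(k+1):ℤ) ≤ 2 ^ (-k) := by
        apply zpow_le_zpow_right₀ one_le_two (by omega)
      nlinarith
    -- s' relation
    have hs' : ((2:ℝ) ^ (-(k+1):ℤ)) ^ n = s ^ n * (1/2) ^ n := by
      rw [← mul_pow]
      congr 1
      rw [show (-(k+1):ℤ) = -k + (-1) by ring, zpow_add₀ (two_ne_zero) (-k) (-1)]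
      norm_num
      rw [hs, zpow_neg]
    -- cubes in G sit inside a fixed ball
    have hQsub : ∀ Q ∈ G, Q ⊆ E ∩ ball z ((L' + D.Cstar + 1) * s) := by
      intro Q hQG y hy
      obtain ⟨hQm, hQd⟩ := hG Q hQG
      refine ⟨cube_subset D hQm hy, ?_⟩
      have h1 : dist y (D.center Q) < (D.Cstar + 1) * s := cube_subset_ball D hQm hy
      have h2 := dist_triangle y (D.center Q) z
      rw [mem_ball]
      have h3 : dist y z < (D.Cstar + 1) * s + L' * s := by
        calc dist y z ≤ dist y (D.center Q) + dist (D.center Q) z := h2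
          _ < (D.Cstar + 1) * s + L' * s := by linarith
      linarith [h3]
    have hballU : μH[(n:ℝ)] (E ∩ ball z ((L' + D.Cstar + 1) * s))
        ≤ ENNReal.ofReal (CU * s ^ n) := by
      calc μH[(n:ℝ)] (E ∩ ball z ((L' + D.Cstar + 1) * s))
          ≤ ENNReal.ofReal ((C_ADR + Kg) * ((L' + D.Cstar + 1) * s) ^ n) :=
            measure_ball_upper hE hKg hg hz (by positivity)
        _ = ENNReal.ofReal (CU * s ^ n) := by rw [hCU, mul_pow]; ring_nf
    -- upper bound on cubes in G
    have hup : ∀ Q ∈ G, μH[(n:ℝ)] Q ≤ ENNReal.ofReal (CU * s ^ n) :=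
      fun Q hQG => le_trans (measure_mono (hQsub Q hQG)) hballU
    -- lower bound on cubes in G
    have hlo : ∀ Q ∈ G, ENNReal.ofReal (CL * s ^ n) ≤ μH[(n:ℝ)] Q := by
      intro Q hQG
      exact cube_lower hE D hdc (hG Q hQG).1
    have hne : ∀ Q ∈ G, μH[(n:ℝ)] Q ≠ ⊤ :=
      fun Q hQG => ne_top_of_le_ne_top ENNReal.ofReal_ne_top (hup Q hQG)
    -- the rank function
    set f : Set (ES n) → ℕ := fun Q => Nat.floor ((μH[(n:ℝ)] Q).toReal / (CL2 * s ^ n))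
      with hf
    have hmono : ∀ Q ∈ G, ∀ Q' ∈ G, Q ⊂ Q' → f Q < f Q' := by
      intro Q hQG Q' hQ'G hss
      have hsh := shell hE D hk1 (hG Q hQG).1 (hG Q' hQ'G).1 hss
      rw [hs', ← mul_assoc, ← hCL] at hsh
      have hfin' := hne Q' hQ'G
      have hfin := hne Q hQG
      have h2 : (μH[(n:ℝ)] Q).toReal + CL * (1/2)^n * s ^ n ≤ (μH[(n:ℝ)] Q').toReal := by
        have := ENNReal.toReal_mono hfin' hsh
        rw [ENNReal.toReal_add hfin ENNReal.ofReal_ne_top,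
          ENNReal.toReal_ofReal (by positivity)] at this
        calc (μH[(n:ℝ)] Q).toReal + CL * (1/2)^n * s^n
            = (μH[(n:ℝ)] Q).toReal + CL * s ^ n * (1/2)^n := by ring
          _ ≤ _ := this
      have hcc : CL2 * s ^ n = CL * (1/2)^n * s ^ n := by rw [hCL2]
      have h3 : ((μH[(n:ℝ)] Q).toReal + CL2 * s ^ n) / (CL2 * s ^ n)
          ≤ (μH[(n:ℝ)] Q').toReal / (CL2 * s ^ n) := by
        apply div_le_div_of_nonneg_right ?_ (by positivity)
        · rw [hcc]; exact h2
      rw [add_div, div_self (by positivity)] at h3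
      have h4 : f Q + 1 ≤ f Q' := by
        rw [hf]
        have := Nat.floor_le_floor h3
        rwa [Nat.floor_add_one (by positivity)] at this
      omega
    -- f maps into range (Rb+1)
    have hfmap : ∀ Q ∈ G, f Q ∈ Finset.range (Rb + 1) := by
      intro Q hQG
      rw [Finset.mem_range]
      have h1 : (μH[(n:ℝ)] Q).toReal ≤ CU * s ^ n :=
        ENNReal.toReal_le_of_le_ofReal (by positivity) (hup Q hQG)
      have h2 : (μH[(n:ℝ)] Q).toReal / (CL2 * s ^ n) ≤ CU / CL2 := by
        rw [show CU / CL2 = (CU * s ^ n) / (CL2 * s ^ n) by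
          rw [mul_div_mul_right _ _ (by positivity : s ^ n ≠ 0)]]
        exact div_le_div_of_nonneg_right h1 (by positivity)
      have h3 := Nat.floor_le_floor h2
      have hfQ : f Q = Nat.floor ((μH[(n:ℝ)] Q).toReal / (CL2 * s ^ n)) := rfl
      omega
    -- fibers are pairwise disjoint families
    have hfib : ∀ v : ℕ, (G.filter (fun Q => f Q = v)).card ≤ N₂ := by
      intro v
      set Gv := G.filter (fun Q => f Q = v) with hGv
      have hGvG : Gv ⊆ G := Finset.filter_subset _ _
      have hdisj : (↑Gv : Set (Set (ES n))).PairwiseDisjoint id := by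
        intro a hav b hbv hab
        have haG : a ∈ G := hGvG (Finset.mem_coe.1 hav)
        have hbG : b ∈ G := hGvG (Finset.mem_coe.1 hbv)
        have hfa : f a = v := (Finset.mem_filter.1 (Finset.mem_coe.1 hav)).2
        have hfb : f b = v := (Finset.mem_filter.1 (Finset.mem_coe.1 hbv)).2
        have hnab : ¬ a ⊆ b := by
          intro hsub
          exact absurd (hmono a haG b hbG ⟨hsub, fun h => hab (subset_antisymm hsub h)⟩)
            (by omega)
        rcases D.nested k k le_rfl a (hG a haG).1 b (hG b hbG).1 with h | h
        · exact absurd h hnab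
        · exact Set.disjoint_iff_inter_eq_empty.2 h
      have hmeas : ∀ Q ∈ Gv, MeasurableSet Q := fun Q hQ => D.borel k Q (hG Q (hGvG hQ)).1
      have h5 : (Gv.card : ℝ≥0∞) * ENNReal.ofReal (CL * s ^ n)
          ≤ ENNReal.ofReal (CU * s ^ n) := by
        calc (Gv.card : ℝ≥0∞) * ENNReal.ofReal (CL * s ^ n)
            = ∑ _Q ∈ Gv, ENNReal.ofReal (CL * s ^ n) := by
              rw [Finset.sum_const, nsmul_eq_mul]
          _ ≤ ∑ Q ∈ Gv, μH[(n:ℝ)] Q := Finset.sum_le_sum (fun Q hQ => hlo Q (hGvG hQ))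
          _ = μH[(n:ℝ)] (⋃ Q ∈ Gv, Q) := (measure_biUnion_finset hdisj hmeas).symm
          _ ≤ μH[(n:ℝ)] (E ∩ ball z ((L' + D.Cstar + 1) * s)) :=
              measure_mono (Set.iUnion₂_subset fun Q hQ => hQsub Q (hGvG hQ))
          _ ≤ ENNReal.ofReal (CU * s ^ n) := hballU
      have h6 : (Gv.card : ℝ) * (CL * s ^ n) ≤ CU * s ^ n := by
        rw [← ENNReal.ofReal_natCast, ← ENNReal.ofReal_mul (Nat.cast_nonneg _)] at h5
        exact (ENNReal.ofReal_le_ofReal_iff (by positivity)).1 h5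
      have h7 : (Gv.card : ℝ) ≤ CU / CL := by
        rw [le_div_iff₀ hCLpos]
        nlinarith [pow_pos hspos n]
      have h8 : Gv.card ≤ Nat.floor (CU / CL) := Nat.le_floor h7
      omega
    have hcard : G.card = ∑ v ∈ Finset.range (Rb + 1), (G.filter (fun Q => f Q = v)).card :=
      Finset.card_eq_sum_card_fiberwise hfmap
    calc G.card = _ := hcard
      _ ≤ ∑ _v ∈ Finset.range (Rb + 1), N₂ := Finset.sum_le_sum (fun v _ => hfib v)
      _ = (Rb + 1) * N₂ := by rw [Finset.sum_const, Finset.card_range, smul_eq_mul]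
      _ ≤ (Rb + 1) * N₂ + 1 := by omega

lemma hyperplane_nonempty {P : Set (ES n)} (h : IsHyperplane P) : P.Nonempty := by
  obtain ⟨ν, c, hν, rfl⟩ := h
  refine ⟨c • ν, ?_⟩
  simp only [Set.mem_setOf_eq, real_inner_smul_right]
  rw [real_inner_self_eq_norm_mul_norm, hν]
  ring

lemma exists_hyperplane : ∃ P : Set (ES n), IsHyperplane P := by
  refine ⟨{Z : ES n | ⟪(EuclideanSpace.single 0 1 : ES n), Z⟫_ℝ = 0},
    EuclideanSpace.single 0 1, 0, ?_, rfl⟩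
  rw [EuclideanSpace.norm_single]
  norm_num

lemma mem_cube_of_mem_E (D : DyadicSystem n E) (j : ℤ) {y : ES n} (hy : y ∈ E) :
    ∃ R ∈ D.cubes j, y ∈ R := by
  have h1 : y ∈ ⋃₀ D.cubes j := by rw [D.cover]; exact hy
  simpa [Set.mem_sUnion] using h1

lemma claimA {K₀ : ℝ} (D : DyadicSystem n E) {ε εc : ℝ} {m : ℕ}
    (hεc : 0 < εc)
    (hc1 : (D.Cstar + K₀ ^ ((3:ℝ)/2)) * ((2:ℝ)^m)⁻¹ ≤ Real.sqrt εc)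
    (hc2 : 20 * D.Cstar * (2:ℝ)^m + D.Cstar < εc ^ (-2:ℤ))
    (hεε : Real.sqrt εc ≤ Real.sqrt ε) (hεc_le : εc ≤ Real.sqrt ε)
    {k : ℤ} {Q : Set (ES n)} (hQ : Q ∈ D.cubes k)
    (hgood : ∀ R ∈ D.cubes (k + m),
      (R ∩ ball (D.center Q) (10 * Metric.diam Q)).Nonempty →
      LocalWHSA E D K₀ εc (k + m) R) :
    LocalBAUP E D (Real.sqrt ε) k Q := by
  classical
  have hCs := D.Cstar_pos
  have hsε : (0:ℝ) ≤ Real.sqrt ε := Real.sqrt_nonneg _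
  rcases le_or_gt (Metric.diam Q) 0 with hd | hd
  · -- trivial case: the ball is empty
    obtain ⟨P₀, hP₀⟩ := exists_hyperplane (n := n)
    have hbe : ball (D.center Q) (10 * Metric.diam Q) = ∅ :=
      ball_eq_empty.2 (by linarith)
    refine ⟨{P₀}, Set.singleton_nonempty _, ?_, ?_, ?_⟩
    · rintro P hP; rw [Set.mem_singleton_iff] at hP; rwa [hP]
    · intro y hy; rw [hbe] at hy; exact absurd hy.2 (Set.notMem_empty y)
    · intro z hz; rw [hbe] at hz; exact absurd hz.2 (Set.notMem_empty z)
  · have hrad : 0 < 10 * Metric.diam Q := by linarith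
    set km : ℤ := k + m with hkm
    have hsplit : (2:ℝ) ^ (-km) = 2 ^ (-k) * ((2:ℝ)^m)⁻¹ := by
      rw [hkm, neg_add, zpow_add₀ (two_ne_zero : (2:ℝ) ≠ 0)]
      congr 1
      rw [zpow_neg, zpow_natCast]
    have hskm : (0:ℝ) < 2 ^ (-km) := two_zpow_pos _
    have hsk : (0:ℝ) < 2 ^ (-k) := two_zpow_pos _
    have hm1 : (0:ℝ) < ((2:ℝ)^m)⁻¹ := by positivity
    -- choose hyperplanes
    have key : ∀ R : Set (ES n), ∃ P : Set (ES n),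
        R ∈ D.cubes km → (R ∩ ball (D.center Q) (10 * Metric.diam Q)).Nonempty →
        (IsHyperplane P ∧
         (∀ Z ∈ P ∩ ball (D.center R) (εc ^ (-2:ℤ) * 2 ^ (-km)),
            Metric.infDist Z E ≤ εc * 2 ^ (-km)) ∧
         (∃ z ∈ closure R, Metric.infDist z P ≤ K₀ ^ ((3:ℝ)/2) * 2 ^ (-km))) := by
      intro R
      by_cases h1 : R ∈ D.cubes km ∧ (R ∩ ball (D.center Q) (10 * Metric.diam Q)).Nonempty
      · obtain ⟨Hs, P, hpair, hP1, hP2, _⟩ := hgood R h1.1 h1.2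
        refine ⟨P, fun _ _ => ⟨?_, hP1, hP2⟩⟩
        obtain ⟨ν, c, hν, _, hPeq⟩ := hpair
        exact ⟨ν, c, hν, hPeq⟩
      · exact ⟨∅, fun h2 h3 => absurd ⟨h2, h3⟩ h1⟩
    choose Pf hPf using key
    set NN : Set (Set (ES n)) :=
      {R | R ∈ D.cubes km ∧ (R ∩ ball (D.center Q) (10 * Metric.diam Q)).Nonempty} with hNN
    refine ⟨Pf '' NN, ?_, ?_, ?_, ?_⟩
    · -- nonempty
      obtain ⟨R₀, hR₀, hxR₀⟩ := mem_cube_of_mem_E D km (center_mem_E D hQ)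
      exact ⟨Pf R₀, Set.mem_image_of_mem _
        ⟨hR₀, ⟨D.center Q, hxR₀, mem_ball_self hrad⟩⟩⟩
    · -- hyperplanes
      rintro P ⟨R, hR, rfl⟩
      exact (hPf R hR.1 hR.2).1
    · -- E close to the planes
      intro y hy
      obtain ⟨R₁, hR₁, hyR₁⟩ := mem_cube_of_mem_E D km hy.1
      have hR₁NN : R₁ ∈ NN := ⟨hR₁, ⟨y, hyR₁, hy.2⟩⟩
      have spec := hPf R₁ hR₁ hR₁NN.2
      obtain ⟨zz, hzz, hzzd⟩ := spec.2.2
      have h1 : Metric.infDist y (⋃₀ (Pf '' NN)) ≤ Metric.infDist y (Pf R₁) :=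
        Metric.infDist_le_infDist_of_subset
          (Set.subset_sUnion_of_mem (Set.mem_image_of_mem _ hR₁NN))
          (hyperplane_nonempty spec.1)
      have h2 : Metric.infDist y (Pf R₁) ≤ Metric.infDist zz (Pf R₁) + dist y zz :=
        Metric.infDist_le_infDist_add_dist
      have h3 : dist y zz ≤ D.Cstar * 2 ^ (-km) := by
        have hb : Bornology.IsBounded (closure R₁) := (cube_bounded D hR₁).closure
        have := Metric.dist_le_diam_of_mem hb (subset_closure hyR₁) hzz
        rw [Metric.diam_closure] at this
        exact this.trans (diam_le' D hR₁)
      have h4 : Metric.infDist y (⋃₀ (Pf '' NN))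
          ≤ (D.Cstar + K₀ ^ ((3:ℝ)/2)) * 2 ^ (-km) := by
        calc Metric.infDist y (⋃₀ (Pf '' NN)) ≤ Metric.infDist zz (Pf R₁) + dist y zz :=
              h1.trans h2
          _ ≤ K₀ ^ ((3:ℝ)/2) * 2 ^ (-km) + D.Cstar * 2 ^ (-km) := add_le_add hzzd h3
          _ = (D.Cstar + K₀ ^ ((3:ℝ)/2)) * 2 ^ (-km) := by ring
      refine h4.trans ?_
      rw [hsplit, ← mul_assoc]
      calc (D.Cstar + K₀ ^ ((3:ℝ)/2)) * 2 ^ (-k) * ((2:ℝ)^m)⁻¹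
          = ((D.Cstar + K₀ ^ ((3:ℝ)/2)) * ((2:ℝ)^m)⁻¹) * 2 ^ (-k) := by ring
        _ ≤ Real.sqrt εc * 2 ^ (-k) := mul_le_mul_of_nonneg_right hc1 hsk.le
        _ ≤ Real.sqrt ε * 2 ^ (-k) := mul_le_mul_of_nonneg_right hεε hsk.le
    · -- planes close to E
      rintro z ⟨hzU, hzball⟩
      obtain ⟨P', hP', hzP'⟩ := hzU
      obtain ⟨R, hRNN, rfl⟩ := hP'
      have spec := hPf R hRNN.1 hRNN.2
      obtain ⟨w, hwR, hwball⟩ := hRNN.2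
      have hdist : dist z (D.center R) < εc ^ (-2:ℤ) * 2 ^ (-km) := by
        have e1 : dist z (D.center Q) < 10 * Metric.diam Q := mem_ball.1 hzball
        have e2 : dist (D.center Q) w < 10 * Metric.diam Q := by
          rw [dist_comm]; exact mem_ball.1 hwball
        have e3 : dist w (D.center R) ≤ D.Cstar * 2 ^ (-km) :=
          (Metric.dist_le_diam_of_mem (cube_bounded D hRNN.1) hwR
            (D.center_mem _ _ hRNN.1)).trans (diam_le' D hRNN.1)
        have e4 : dist z (D.center R) ≤ dist z (D.center Q) + dist (D.center Q) w
            + dist w (D.center R) := dist_triangle4 z (D.center Q) w (D.center R)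
        have e5 : 10 * Metric.diam Q ≤ 10 * (D.Cstar * 2 ^ (-k)) := by
          have := diam_le' D hQ
          linarith
        have e6 : dist z (D.center R) < 20 * D.Cstar * 2 ^ (-k) + D.Cstar * 2 ^ (-km) := by
          calc dist z (D.center R) ≤ _ := e4
            _ < 10 * Metric.diam Q + 10 * Metric.diam Q + D.Cstar * 2 ^ (-km) := by linarith
            _ ≤ 20 * D.Cstar * 2 ^ (-k) + D.Cstar * 2 ^ (-km) := by linarith
        have e7 : 20 * D.Cstar * 2 ^ (-k) + D.Cstar * 2 ^ (-km)
            = (20 * D.Cstar * (2:ℝ)^m + D.Cstar) * 2 ^ (-km) := by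
          rw [hsplit]
          field_simp
        have e8 : (20 * D.Cstar * (2:ℝ)^m + D.Cstar) * 2 ^ (-km)
            < εc ^ (-2:ℤ) * 2 ^ (-km) := by
          exact mul_lt_mul_of_pos_right hc2 hskm
        calc dist z (D.center R) < _ := e6
          _ = _ := e7
          _ < _ := e8
      have h9 := spec.2.1 z ⟨hzP', mem_ball.2 hdist⟩
      refine h9.trans ?_
      rw [hsplit, ← mul_assoc]
      calc εc * 2 ^ (-k) * ((2:ℝ)^m)⁻¹ = (εc * ((2:ℝ)^m)⁻¹) * 2 ^ (-k) := by ring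
        _ ≤ Real.sqrt ε * 2 ^ (-k) := by
            apply mul_le_mul_of_nonneg_right ?_ hsk.le
            calc εc * ((2:ℝ)^m)⁻¹ ≤ εc * 1 := by
                  apply mul_le_mul_of_nonneg_left ?_ hεc.le
                  rw [inv_le_one_iff₀]
                  right; exact one_le_pow₀ one_le_two
              _ = εc := mul_one εc
              _ ≤ Real.sqrt ε := hεc_le

lemma measure_zero_of_subsingleton (hn : 1 ≤ n) (h : E.Subsingleton) :
    μH[(n:ℝ)] E = 0 := by
  rcases Set.Subsingleton.eq_empty_or_singleton h with h1 | ⟨x, h1⟩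
  · simp [h1]
  · rw [h1]
    have h2 : dimH ({x} : Set (ES n)) < ((n : ℝ≥0) : ℝ≥0∞) := by
      rw [dimH_subsingleton (Set.subsingleton_singleton)]
      exact_mod_cast (by exact_mod_cast Nat.lt_of_lt_of_le Nat.zero_lt_one hn :
        (0:ℝ≥0) < (n:ℝ≥0))
    have h3 := hausdorffMeasure_of_dimH_lt h2
    simpa using h3

lemma claimB {C_ADR Kg : ℝ} (hE : IsADR n C_ADR E) (D : DyadicSystem n E)
    (hKg : 0 ≤ Kg)
    (hg : EMetric.diam E ≠ ⊤ →
      μH[(n:ℝ)] E ≤ ENNReal.ofReal (Kg * (EMetric.diam E).toReal ^ n)) (m : ℕ) :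
    ∃ C₂ : ℝ, 1 ≤ C₂ ∧ ∀ (k : ℤ) (Q R : Set (ES n)), Q ∈ D.cubes k →
      R ∈ D.cubes (k + m) →
      μH[(n:ℝ)] Q ≤ ENNReal.ofReal C₂ * μH[(n:ℝ)] R := by
  have hC1 : (1:ℝ) ≤ C_ADR := hE.2.1
  have hC0 : (0:ℝ) < C_ADR := lt_of_lt_of_le zero_lt_one hC1
  have ha := D.a₀_pos
  have hCs := D.Cstar_pos
  set CL : ℝ := C_ADR⁻¹ * (D.a₀/2) ^ n with hCL
  have hCLpos : 0 < CL := by positivity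
  set CB : ℝ := CL * (((2:ℝ)^m)⁻¹) ^ n with hCB
  have hCBpos : 0 < CB := by positivity
  set CUB : ℝ := (C_ADR + Kg) * (D.Cstar + 1) ^ n with hCUB
  have hCUBpos : 0 < CUB := by positivity
  refine ⟨max 1 (CUB / CB), le_max_left _ _, ?_⟩
  intro k Q R hQ hR
  have hofR1 : (1:ℝ≥0∞) ≤ ENNReal.ofReal (max 1 (CUB / CB)) := by
    rw [show (1:ℝ≥0∞) = ENNReal.ofReal 1 by simp]
    exact ENNReal.ofReal_le_ofReal (le_max_left _ _)
  by_cases hβ : EMetric.diam E ≤ ENNReal.ofReal (D.a₀ * 2 ^ (-(k + m : ℤ)) / 2)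
  · -- R = E
    have hRE : R = E := cube_eq_E D hβ hR
    have h1 : μH[(n:ℝ)] Q ≤ μH[(n:ℝ)] R := by
      rw [hRE]; exact measure_mono (cube_subset D hQ)
    calc μH[(n:ℝ)] Q ≤ μH[(n:ℝ)] R := h1
      _ ≤ ENNReal.ofReal (max 1 (CUB / CB)) * μH[(n:ℝ)] R :=
          le_mul_of_one_le_left zero_le hofR1
  · push_neg at hβ
    have hlow := cube_lower hE D hβ hR
    -- upper bound for Q
    have hup : μH[(n:ℝ)] Q ≤ ENNReal.ofReal (CUB * ((2:ℝ) ^ (-k)) ^ n) := by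
      have hsub : Q ⊆ E ∩ ball (D.center Q) ((D.Cstar + 1) * 2 ^ (-k)) :=
        fun y hy => ⟨cube_subset D hQ hy, cube_subset_ball D hQ hy⟩
      calc μH[(n:ℝ)] Q ≤ μH[(n:ℝ)] (E ∩ ball (D.center Q) ((D.Cstar + 1) * 2 ^ (-k))) :=
            measure_mono hsub
        _ ≤ ENNReal.ofReal ((C_ADR + Kg) * ((D.Cstar + 1) * 2 ^ (-k)) ^ n) :=
            measure_ball_upper hE hKg hg (center_mem_E D hQ)
              (by positivity)
        _ = ENNReal.ofReal (CUB * ((2:ℝ) ^ (-k)) ^ n) := by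
            rw [hCUB, mul_pow]; ring_nf
    -- relation of scales
    have hscale : CL * ((2:ℝ) ^ (-(k + m : ℤ))) ^ n = CB * ((2:ℝ) ^ (-k)) ^ n := by
      rw [hCB]
      have h2 : (2:ℝ) ^ (-(k + m : ℤ)) = 2 ^ (-k) * ((2:ℝ)^m)⁻¹ := by
        rw [neg_add, zpow_add₀ (two_ne_zero : (2:ℝ) ≠ 0)]
        congr 1
        rw [zpow_neg, zpow_natCast]
      rw [h2, mul_pow]
      ring
    rw [hscale] at hlow
    have hreal : CUB * ((2:ℝ) ^ (-k)) ^ n ≤ max 1 (CUB / CB) * (CB * ((2:ℝ) ^ (-k)) ^ n) := by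
      have h3 : CUB / CB ≤ max 1 (CUB / CB) := le_max_right _ _
      have h4 : (0:ℝ) < ((2:ℝ) ^ (-k)) ^ n := by positivity
      have h5 : CUB = (CUB / CB) * CB := by field_simp
      nlinarith [mul_le_mul_of_nonneg_right h3 hCBpos.le]
    calc μH[(n:ℝ)] Q ≤ ENNReal.ofReal (CUB * ((2:ℝ) ^ (-k)) ^ n) := hup
      _ ≤ ENNReal.ofReal (max 1 (CUB / CB) * (CB * ((2:ℝ) ^ (-k)) ^ n)) :=
          ENNReal.ofReal_le_ofReal hreal
      _ = ENNReal.ofReal (max 1 (CUB / CB)) * ENNReal.ofReal (CB * ((2:ℝ) ^ (-k)) ^ n) :=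
          ENNReal.ofReal_mul (le_trans zero_le_one (le_max_left _ _))
      _ ≤ ENNReal.ofReal (max 1 (CUB / CB)) * μH[(n:ℝ)] R := by
          exact mul_le_mul_right hlow _

lemma gap_lemma {C_ADR Kg : ℝ} (hE : IsADR n C_ADR E) (D : DyadicSystem n E)
    (hn0 : n ≠ 0) (hKg : 0 ≤ Kg)
    (hg : EMetric.diam E ≠ ⊤ →
      μH[(n:ℝ)] E ≤ ENNReal.ofReal (Kg * (EMetric.diam E).toReal ^ n))
    {cgap : ℕ}
    (hcgap : (C_ADR + Kg) * (D.Cstar + 1) ^ n / (C_ADR⁻¹ * (D.a₀/2) ^ n) < 2 ^ cgap)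
    {k k₀ : ℤ} {Q Q₀ : Set (ES n)} (hQ : Q ∈ D.cubes k) (hQ₀ : Q₀ ∈ D.cubes k₀)
    (hsub : Q ⊆ Q₀) (hneq : Q₀ ≠ E) : k₀ ≤ k + cgap := by
  have hC1 : (1:ℝ) ≤ C_ADR := hE.2.1
  have hC0 : (0:ℝ) < C_ADR := lt_of_lt_of_le zero_lt_one hC1
  have ha := D.a₀_pos
  have hCs := D.Cstar_pos
  set CL : ℝ := C_ADR⁻¹ * (D.a₀/2) ^ n with hCL
  have hCLpos : 0 < CL := by positivity
  set CUB : ℝ := (C_ADR + Kg) * (D.Cstar + 1) ^ n with hCUB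
  have hCUBpos : 0 < CUB := by positivity
  by_cases hβ : EMetric.diam E ≤ ENNReal.ofReal (D.a₀ * 2 ^ (-k) / 2)
  · exact absurd (subset_antisymm (cube_subset D hQ₀)
      ((cube_eq_E D hβ hQ) ▸ hsub)) hneq
  · push_neg at hβ
    have hlow := cube_lower hE D hβ hQ
    have hup : μH[(n:ℝ)] Q₀ ≤ ENNReal.ofReal (CUB * ((2:ℝ) ^ (-k₀)) ^ n) := by
      have hsub' : Q₀ ⊆ E ∩ ball (D.center Q₀) ((D.Cstar + 1) * 2 ^ (-k₀)) :=
        fun y hy => ⟨cube_subset D hQ₀ hy, cube_subset_ball D hQ₀ hy⟩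
      calc μH[(n:ℝ)] Q₀
          ≤ μH[(n:ℝ)] (E ∩ ball (D.center Q₀) ((D.Cstar + 1) * 2 ^ (-k₀))) :=
            measure_mono hsub'
        _ ≤ ENNReal.ofReal ((C_ADR + Kg) * ((D.Cstar + 1) * 2 ^ (-k₀)) ^ n) :=
            measure_ball_upper hE hKg hg (center_mem_E D hQ₀) (by positivity)
        _ = ENNReal.ofReal (CUB * ((2:ℝ) ^ (-k₀)) ^ n) := by rw [hCUB, mul_pow]; ring_nf
    have hchain : ENNReal.ofReal (CL * ((2:ℝ) ^ (-k)) ^ n)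
        ≤ ENNReal.ofReal (CUB * ((2:ℝ) ^ (-k₀)) ^ n) :=
      hlow.trans ((measure_mono hsub).trans hup)
    have hreal : CL * ((2:ℝ) ^ (-k)) ^ n ≤ CUB * ((2:ℝ) ^ (-k₀)) ^ n :=
      (ENNReal.ofReal_le_ofReal_iff (by positivity)).1 hchain
    by_contra hcon
    push_neg at hcon
    -- k + cgap < k₀
    have hdk : (cgap:ℤ) + 1 ≤ k₀ - k := by omega
    have hrel : (2:ℝ) ^ (-k) = 2 ^ (k₀ - k) * 2 ^ (-k₀) := by
      rw [← zpow_add₀ (two_ne_zero : (2:ℝ) ≠ 0)]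
      congr 1; ring
    rw [hrel, mul_pow, ← mul_assoc] at hreal
    have hq : (0:ℝ) < ((2:ℝ) ^ (-k₀)) ^ n := by positivity
    have h1 : CL * ((2:ℝ) ^ (k₀ - k)) ^ n ≤ CUB := by nlinarith
    have h2 : ((2:ℝ) ^ (k₀ - k)) ^ n ≤ CUB / CL := by
      rw [le_div_iff₀ hCLpos]; nlinarith
    have h3 : (1:ℝ) ≤ (2:ℝ) ^ (k₀ - k) := by
      calc (1:ℝ) = 2 ^ (0:ℤ) := by norm_num
        _ ≤ 2 ^ (k₀ - k) := zpow_le_zpow_right₀ one_le_two (by omega)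
    have h4 : (2:ℝ) ^ (k₀ - k) ≤ ((2:ℝ) ^ (k₀ - k)) ^ n := le_self_pow₀ h3 hn0
    have h5 : (2:ℝ) ^ ((cgap:ℤ) + 1) ≤ 2 ^ (k₀ - k) :=
      zpow_le_zpow_right₀ one_le_two hdk
    have h6 : (2:ℝ) ^ ((cgap:ℤ) + 1) = 2 * (2:ℝ) ^ cgap := by
      rw [zpow_add₀ (two_ne_zero : (2:ℝ) ≠ 0), zpow_natCast]; ring
    have h7 : (0:ℝ) < (2:ℝ) ^ cgap := by positivity
    linarith

end WBaux

set_option maxHeartbeats 8000000 in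
/-- If an `n`-dimensional ADR set `E ⊆ ℝ^{n+1}`, `n ≥ 2`, satisfies the
WHSA property with parameters `K₀`, `ε₀ < K₀⁻⁶`, then for every `0 < ε < ε₀` the cubes
failing the `√ε`-local BAUP condition satisfy a Carleson packing condition; in particular
`E` satisfies the BAUP condition. -/
theorem WHSA_implies_BAUP (n : ℕ) (hn : 2 ≤ n) (C_ADR : ℝ) (E : Set (ES n))
    (hE : IsADR n C_ADR E) (D : DyadicSystem n E) (K₀ ε₀ : ℝ)
    (hK₀ : 1 ≤ K₀) (hε₀ : 0 < ε₀) (hε₀' : ε₀ < K₀ ^ (-6 : ℤ))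
    (hWHSA : ∀ ε : ℝ, 0 < ε → ε < ε₀ →
      ∃ C₁ : ℝ, PackedBy E D (fun k Q => ¬ LocalWHSA E D K₀ ε k Q) C₁) :
    (∀ ε : ℝ, 0 < ε → ε < ε₀ →
      ∃ C : ℝ, PackedBy E D (fun k Q => ¬ LocalBAUP E D (Real.sqrt ε) k Q) C) ∧
    (∃ ε₁ : ℝ, 0 < ε₁ ∧ ∀ ε : ℝ, 0 < ε → ε < ε₁ →
      ∃ C : ℝ, PackedBy E D (fun k Q => ¬ LocalBAUP E D ε k Q) C) := by
  classical
  have hn0 : n ≠ 0 := by omega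
  have hn1 : 1 ≤ n := by omega
  have main : ∀ ε : ℝ, 0 < ε → ε < ε₀ →
      ∃ C : ℝ, PackedBy E D (fun k Q => ¬ LocalBAUP E D (Real.sqrt ε) k Q) C := by
    intro ε hε hεlt
    by_cases hE0 : EMetric.diam E = 0
    · -- E is a subsingleton : all cubes have measure zero
      refine ⟨1, ?_⟩
      intro k₀ Q₀ hQ₀
      have hzero : μH[(n:ℝ)] E = 0 :=
        WBaux.measure_zero_of_subsingleton hn1 (EMetric.diam_eq_zero_iff.1 hE0)
      have hz : ∀ p : {p : ℤ × Set (ES n) // p.2 ∈ D.cubes p.1 ∧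
          ¬ LocalBAUP E D (Real.sqrt ε) p.1 p.2 ∧ p.2 ⊆ Q₀}, μH[(n:ℝ)] p.1.2 = 0 :=
        fun p => measure_mono_null (WBaux.cube_subset D p.2.1) hzero
      rw [ENNReal.tsum_eq_zero.2 hz]
      exact zero_le
    · have hC1 : (1:ℝ) ≤ C_ADR := hE.2.1
      have hC0 : (0:ℝ) < C_ADR := lt_of_lt_of_le zero_lt_one hC1
      have ha := D.a₀_pos
      have hCs := D.Cstar_pos
      -- the global mass bound
      obtain ⟨Kg, hKg0, hKg⟩ : ∃ Kg : ℝ, 0 ≤ Kg ∧ (EMetric.diam E ≠ ⊤ →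
          μH[(n:ℝ)] E ≤ ENNReal.ofReal (Kg * (EMetric.diam E).toReal ^ n)) := by
        by_cases hT : EMetric.diam E = ⊤
        · exact ⟨0, le_rfl, fun h => absurd hT h⟩
        · obtain ⟨Kg, h1, h2⟩ := WBaux.global_bound hE hn1 hT
          exact ⟨Kg, h1, fun _ => h2⟩
      -- bounded multiplicity for the fibers of the witness map
      obtain ⟨N, hNpos, hN⟩ := WBaux.multiplicity hE D hKg0 hKg
        (L' := 11 * D.Cstar + 1) (by linarith)
      -- gap constant
      obtain ⟨cgap, hcgap⟩ : ∃ c : ℕ,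
          (C_ADR + Kg) * (D.Cstar + 1) ^ n / (C_ADR⁻¹ * (D.a₀/2) ^ n) < 2 ^ c :=
        pow_unbounded_of_one_lt _ one_lt_two
      have hcg0 : (0:ℝ) < 2 ^ cgap := by positivity
      -- bounded multiplicity for the ancestors
      set L : ℝ := 2 * D.Cstar + 11 * D.Cstar * 2 ^ cgap + 1 with hLdef
      have hL1 : (1:ℝ) ≤ L := by
        have h1 : (0:ℝ) ≤ 2 * D.Cstar := by linarith
        have h2 : (0:ℝ) ≤ 11 * D.Cstar * 2 ^ cgap := by positivity
        rw [hLdef]; linarith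
      obtain ⟨N₃, hN₃pos, hN₃⟩ := WBaux.multiplicity hE D hKg0 hKg (L' := L) hL1
      have hLge : 2 * D.Cstar + 11 * D.Cstar * 2 ^ cgap ≤ L := by rw [hLdef]; linarith
      clear_value L
      -- the constant A
      set A : ℝ := D.Cstar + K₀ ^ ((3:ℝ)/2) + 1 with hAdef
      have hK32 : (1:ℝ) ≤ K₀ ^ ((3:ℝ)/2) := Real.one_le_rpow hK₀ (by norm_num)
      have hA2 : (2:ℝ) ≤ A := by rw [hAdef]; linarith
      have hApos : (0:ℝ) < A := by linarith
      have hCsA : D.Cstar ≤ A := by rw [hAdef]; linarith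
      have hCK_A : D.Cstar + K₀ ^ ((3:ℝ)/2) ≤ A := by rw [hAdef]; linarith
      clear_value A
      -- the fine parameter εc
      set εc : ℝ := min ε (min (ε₀/2) (min (1/(42*A^2)) (1/(22*D.Cstar*2^cgap))))
        with hεcdef
      have hεc0 : 0 < εc := lt_min hε (lt_min (by linarith) (lt_min (by positivity)
        (by positivity)))
      have hεcε : εc ≤ ε := min_le_left _ _
      have hεcε₀ : εc < ε₀ :=
        lt_of_le_of_lt ((min_le_right _ _).trans (min_le_left _ _)) (by linarith)
      have hεcA : εc ≤ 1/(42*A^2) :=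
        (min_le_right _ _).trans ((min_le_right _ _).trans (min_le_left _ _))
      have hεcC : εc ≤ 1/(22*D.Cstar*2^cgap) :=
        (min_le_right _ _).trans ((min_le_right _ _).trans (min_le_right _ _))
      have hεc1 : εc ≤ 1 := by
        refine hεcA.trans ?_
        rw [div_le_one (by positivity)]
        nlinarith
      have hu0 : 0 < Real.sqrt εc := Real.sqrt_pos.2 hεc0
      have huu : Real.sqrt εc * Real.sqrt εc = εc := Real.mul_self_sqrt hεc0.le
      have hu1 : Real.sqrt εc ≤ 1 := by
        rw [show (1:ℝ) = Real.sqrt 1 by rw [Real.sqrt_one]]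
        exact Real.sqrt_le_sqrt hεc1
      clear_value εc
      -- the scale separation m
      have hex : ∃ i : ℕ, A / Real.sqrt εc ≤ 2 ^ i := by
        obtain ⟨i, hi⟩ := pow_unbounded_of_one_lt (A / Real.sqrt εc) one_lt_two
        exact ⟨i, hi.le⟩
      set m : ℕ := max (Nat.find hex) cgap with hmdef
      have hm_ge : A / Real.sqrt εc ≤ (2:ℝ) ^ m :=
        le_trans (Nat.find_spec hex)
          (pow_le_pow_right₀ one_le_two (le_max_left _ _))
      have hm_le : (2:ℝ) ^ m ≤ max (2 * (A / Real.sqrt εc)) ((2:ℝ) ^ cgap) := by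
        rcases le_total (Nat.find hex) cgap with h | h
        · have hmeq : m = cgap := max_eq_right h
          rw [hmeq]; exact le_max_right _ _
        · have hmeq : m = Nat.find hex := max_eq_left h
          rw [hmeq]
          rcases Nat.eq_zero_or_pos (Nat.find hex) with h0 | h0
          · rw [h0]
            refine le_trans ?_ (le_max_left _ _)
            have h2 : (2:ℝ) ≤ A / Real.sqrt εc := by
              rw [le_div_iff₀ hu0]; nlinarith
            simp only [pow_zero]; linarith
          · have hnot : ¬ (A / Real.sqrt εc ≤ 2 ^ (Nat.find hex - 1)) :=
              Nat.find_min hex (by omega)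
            push_neg at hnot
            have h2 : (2:ℝ)^(Nat.find hex) = 2 * 2^(Nat.find hex - 1) := by
              rw [← pow_succ']; congr 1; omega
            refine le_trans ?_ (le_max_left _ _)
            rw [h2]; linarith
      have hmcg : cgap ≤ m := le_max_right _ _
      clear_value m
      -- constraint 1
      have hc1 : (D.Cstar + K₀ ^ ((3:ℝ)/2)) * ((2:ℝ)^m)⁻¹ ≤ Real.sqrt εc := by
        have hM2pos : (0:ℝ) < (2:ℝ)^m := by positivity
        have h1 : ((2:ℝ)^m)⁻¹ ≤ Real.sqrt εc / A := by
          have h2 := inv_anti₀ (by positivity : 0 < A / Real.sqrt εc) hm_ge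
          rwa [inv_div] at h2
        calc (D.Cstar + K₀^((3:ℝ)/2)) * ((2:ℝ)^m)⁻¹ ≤ A * (Real.sqrt εc / A) := by
              apply mul_le_mul hCK_A h1 (by positivity) hApos.le
          _ = Real.sqrt εc := by field_simp
      -- constraint 2
      have hinv2 : εc ^ (-2:ℤ) = (εc*εc)⁻¹ := by rw [zpow_neg, zpow_two]
      have hc2 : 20 * D.Cstar * (2:ℝ)^m + D.Cstar < εc ^ (-2:ℤ) := by
        rw [hinv2]
        have hM2pos : (0:ℝ) < (2:ℝ)^m := by positivity
        have hkey : (20 * D.Cstar * (2:ℝ)^m + D.Cstar) * (εc * εc) < 1 := by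
          rcases le_max_iff.1 hm_le with hca | hcb
          · -- 2^m ≤ 2A/√εc
            have hMu : (2:ℝ)^m * Real.sqrt εc ≤ 2*A := by
              rw [← le_div_iff₀ hu0]
              rw [← mul_div_assoc] at hca
              exact hca
            have h42 : εc * (42*A^2) ≤ 1 := (le_div_iff₀ (by positivity)).1 hεcA
            have e1 : (2:ℝ)^m * εc ≤ 2*A*Real.sqrt εc := by
              have h5 := mul_le_mul_of_nonneg_right hMu hu0.le
              calc (2:ℝ)^m * εc = (2:ℝ)^m * Real.sqrt εc * Real.sqrt εc := by
                    rw [mul_assoc, huu]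
                _ ≤ 2*A*Real.sqrt εc := h5
            have e2 : (2:ℝ)^m * εc ≤ 2*A := by nlinarith
            have e3 : 20*D.Cstar*(2:ℝ)^m*(εc*εc) ≤ 40*A^2*εc := by
              have h5 := mul_le_mul_of_nonneg_right e2 hεc0.le
              calc 20*D.Cstar*(2:ℝ)^m*(εc*εc) = 20*D.Cstar*((2:ℝ)^m*εc*εc) := by ring
                _ ≤ 20*D.Cstar*(2*A*εc) := mul_le_mul_of_nonneg_left h5 (by positivity)
                _ ≤ 20*A*(2*A*εc) := by
                    have h8 : (0:ℝ) ≤ 2*A*εc := by positivity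
                    nlinarith [mul_le_mul_of_nonneg_right hCsA h8]
                _ = 40*A^2*εc := by ring
            have e4 : D.Cstar*(εc*εc) ≤ A^2*εc := by
              have h9 : D.Cstar*(εc*εc) ≤ A*(εc*εc) :=
                mul_le_mul_of_nonneg_right hCsA (by positivity)
              have hss : εc*εc ≤ εc := by nlinarith
              have h10 : A*(εc*εc) ≤ A*εc := mul_le_mul_of_nonneg_left hss hApos.le
              have h11 : A*εc ≤ A^2*εc := by
                have h12 : A ≤ A^2 := by nlinarith
                exact mul_le_mul_of_nonneg_right h12 hεc0.le
              linarith
            have e6 : (0:ℝ) < A^2*εc := by positivity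
            have e8 : 42*(A^2*εc) ≤ 1 := by
              have h13 : 42*(A^2*εc) = εc*(42*A^2) := by ring
              linarith
            have e9 : 20*D.Cstar*(2:ℝ)^m*(εc*εc) + D.Cstar*(εc*εc) ≤ 41*(A^2*εc) := by
              linarith
            have e10 : (20*D.Cstar*(2:ℝ)^m + D.Cstar)*(εc*εc)
                = 20*D.Cstar*(2:ℝ)^m*(εc*εc) + D.Cstar*(εc*εc) := by ring
            linarith
          · -- 2^m ≤ 2^cgap
            have h22 : εc * (22*D.Cstar*2^cgap) ≤ 1 := (le_div_iff₀ (by positivity)).1 hεcC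
            have e7 : (0:ℝ) < D.Cstar*(2:ℝ)^cgap*εc := by positivity
            have hG1 : (1:ℝ) ≤ (2:ℝ)^cgap := one_le_pow₀ one_le_two
            have hss : εc*εc ≤ εc := by nlinarith
            have hCG : D.Cstar ≤ D.Cstar*(2:ℝ)^cgap := by nlinarith
            have t0 : 20*D.Cstar*(2:ℝ)^m ≤ 20*D.Cstar*(2:ℝ)^cgap :=
              mul_le_mul_of_nonneg_left hcb (by positivity)
            have t1 : (20*D.Cstar*(2:ℝ)^m + D.Cstar)*(εc*εc)
                ≤ (21*(D.Cstar*(2:ℝ)^cgap))*(εc*εc) := by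
              apply mul_le_mul_of_nonneg_right ?_ (by positivity)
              linarith
            have t2 : (21*(D.Cstar*(2:ℝ)^cgap))*(εc*εc) ≤ 21*(D.Cstar*(2:ℝ)^cgap*εc) := by
              calc (21*(D.Cstar*(2:ℝ)^cgap))*(εc*εc)
                  ≤ (21*(D.Cstar*(2:ℝ)^cgap))*εc := mul_le_mul_of_nonneg_left hss (by positivity)
                _ = 21*(D.Cstar*(2:ℝ)^cgap*εc) := by ring
            have h23 : 22*(D.Cstar*(2:ℝ)^cgap*εc) ≤ 1 := by
              have h24 : 22*(D.Cstar*(2:ℝ)^cgap*εc) = εc*(22*D.Cstar*2^cgap) := by ring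
              linarith
            linarith
        have hpos2 : (0:ℝ) < εc*εc := by positivity
        rw [inv_eq_one_div, lt_div_iff₀ hpos2]
        exact hkey
      have hεε : Real.sqrt εc ≤ Real.sqrt ε := Real.sqrt_le_sqrt hεcε
      have hεcle : εc ≤ Real.sqrt ε := by
        have h1 : εc ≤ Real.sqrt εc := by
          exact le_of_eq_of_le huu.symm (mul_le_of_le_one_right hu0.le hu1)
        exact h1.trans hεε
      -- the WHSA packing, claim B constants
      obtain ⟨C₁, hC₁⟩ := hWHSA εc hεc0 hεcε₀
      obtain ⟨C₂, hC₂1, hC₂⟩ := WBaux.claimB hE D hKg0 hKg m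
      obtain ⟨C₄, hC₄1, hC₄⟩ := WBaux.claimB hE D hKg0 hKg 0
      -- the witness map
      have hwit : ∀ p : ℤ × Set (ES n), ∃ R : Set (ES n),
          (p.2 ∈ D.cubes p.1 ∧ ¬ LocalBAUP E D (Real.sqrt ε) p.1 p.2) →
          (R ∈ D.cubes (p.1 + m) ∧ (¬ LocalWHSA E D K₀ εc (p.1 + m) R) ∧
            dist (D.center p.2) (D.center R) ≤ 11 * D.Cstar * 2 ^ (-p.1)) := by
        intro p
        by_cases hb : p.2 ∈ D.cubes p.1 ∧ ¬ LocalBAUP E D (Real.sqrt ε) p.1 p.2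
        · have hnall : ¬ ∀ R ∈ D.cubes (p.1 + m),
              (R ∩ ball (D.center p.2) (10 * Metric.diam p.2)).Nonempty →
              LocalWHSA E D K₀ εc (p.1 + m) R := by
            intro hall
            exact hb.2 (WBaux.claimA D hεc0 hc1 hc2 hεε hεcle hb.1 hall)
          push_neg at hnall
          obtain ⟨R, hR1, hR2, hR3⟩ := hnall
          obtain ⟨w, hwR, hwb⟩ := hR2
          refine ⟨R, fun _ => ⟨hR1, hR3, ?_⟩⟩
          have e1 : dist (D.center p.2) w < 10 * Metric.diam p.2 := by
            rw [dist_comm]; exact mem_ball.1 hwb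
          have e2 : dist w (D.center R) ≤ D.Cstar * 2 ^ (-(p.1 + m : ℤ)) :=
            (Metric.dist_le_diam_of_mem (WBaux.cube_bounded D hR1) hwR
              (D.center_mem _ _ hR1)).trans (WBaux.diam_le' D hR1)
          have e3 : (2:ℝ) ^ (-(p.1 + m : ℤ)) ≤ 2 ^ (-p.1) :=
            zpow_le_zpow_right₀ one_le_two (by omega)
          have e4 := dist_triangle (D.center p.2) w (D.center R)
          have e5 : 10 * Metric.diam p.2 ≤ 10 * (D.Cstar * 2 ^ (-p.1)) := by
            have := WBaux.diam_le' D hb.1; linarith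
          have e6 : D.Cstar * 2 ^ (-(p.1 + m : ℤ)) ≤ D.Cstar * 2 ^ (-p.1) :=
            mul_le_mul_of_nonneg_left e3 hCs.le
          linarith
        · exact ⟨E, fun h => absurd h hb⟩
      choose W hW using hwit
      -- the big constant
      set C₁' : ℝ := max C₁ 0 with hC₁'def
      set X : ℝ≥0∞ := ENNReal.ofReal C₂ * ((N:ℝ≥0∞) * ((N₃:ℝ≥0∞) *
        (ENNReal.ofReal C₁' * ENNReal.ofReal C₄))) with hXdef
      have hXne : X ≠ ⊤ := by
        rw [hXdef]
        exact ENNReal.mul_ne_top ENNReal.ofReal_ne_top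
          (ENNReal.mul_ne_top (ENNReal.natCast_ne_top N)
            (ENNReal.mul_ne_top (ENNReal.natCast_ne_top N₃)
              (ENNReal.mul_ne_top ENNReal.ofReal_ne_top ENNReal.ofReal_ne_top)))
      refine ⟨X.toReal, ?_⟩
      intro k₀ Q₀ hQ₀
      rw [ENNReal.ofReal_toReal hXne]
      rw [ENNReal.tsum_eq_iSup_sum]
      refine iSup_le (fun F => ?_)
      have hgW : ∀ t : {p : ℤ × Set (ES n) // p.2 ∈ D.cubes p.1 ∧
          ¬ LocalBAUP E D (Real.sqrt ε) p.1 p.2 ∧ p.2 ⊆ Q₀},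
          W t.1 ∈ D.cubes (t.1.1 + m) ∧ ¬ LocalWHSA E D K₀ εc (t.1.1 + m) (W t.1) ∧
            dist (D.center t.1.2) (D.center (W t.1)) ≤ 11 * D.Cstar * 2 ^ (-t.1.1) :=
        fun t => hW t.1 ⟨t.2.1, t.2.2.1⟩
      set g : {p : ℤ × Set (ES n) // p.2 ∈ D.cubes p.1 ∧
          ¬ LocalBAUP E D (Real.sqrt ε) p.1 p.2 ∧ p.2 ⊆ Q₀} → ℤ × Set (ES n) :=
        fun t => (t.1.1 + m, W t.1) with hgdef
      -- step 1 : compare with the witnesses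
      have step1 : ∑ t ∈ F, μH[(n:ℝ)] t.1.2
          ≤ ENNReal.ofReal C₂ * ∑ t ∈ F, μH[(n:ℝ)] (g t).2 := by
        rw [Finset.mul_sum]
        exact Finset.sum_le_sum (fun t _ => hC₂ t.1.1 t.1.2 (W t.1) t.2.1 (hgW t).1)
      -- step 2 : group by witness, fibers have at most N elements
      have step2 : ∑ t ∈ F, μH[(n:ℝ)] (g t).2
          ≤ (N:ℝ≥0∞) * ∑ w' ∈ F.image g, μH[(n:ℝ)] w'.2 := by
        have hfib : ∑ t ∈ F, μH[(n:ℝ)] (g t).2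
            = ∑ w' ∈ F.image g, ∑ t ∈ F.filter (fun t => g t = w'), μH[(n:ℝ)] (g t).2 :=
          (Finset.sum_fiberwise_of_maps_to (fun t ht => Finset.mem_image_of_mem g ht) _).symm
        rw [hfib, Finset.mul_sum]
        refine Finset.sum_le_sum (fun w' hw' => ?_)
        have hinner : ∑ t ∈ F.filter (fun t => g t = w'), μH[(n:ℝ)] (g t).2
            = (F.filter (fun t => g t = w')).card • μH[(n:ℝ)] w'.2 := by
          rw [Finset.sum_congr rfl (fun t ht => by rw [(Finset.mem_filter.1 ht).2]),
            Finset.sum_const]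
        rw [hinner]
        have hcard : (F.filter (fun t => g t = w')).card ≤ N := by
          rcases Finset.eq_empty_or_nonempty (F.filter (fun t => g t = w')) with he | hne
          · rw [he]; simpa using Nat.zero_le N
          · obtain ⟨t₀, ht₀⟩ := hne
            have ht₀f := Finset.mem_filter.1 ht₀
            have hw'2mem : w'.2 ∈ D.cubes w'.1 := by
              rw [← ht₀f.2]; exact (hgW t₀).1
            have hzE : D.center w'.2 ∈ E := WBaux.center_mem_E D hw'2mem
            have hGinj : Set.InjOn (fun t : {p : ℤ × Set (ES n) // p.2 ∈ D.cubes p.1 ∧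
                ¬ LocalBAUP E D (Real.sqrt ε) p.1 p.2 ∧ p.2 ⊆ Q₀} => t.1.2)
                ↑(F.filter (fun t => g t = w')) := by
              intro a ha b hb hab
              have ha' : g a = w' := (Finset.mem_filter.1 (Finset.mem_coe.1 ha)).2
              have hb' : g b = w' := (Finset.mem_filter.1 (Finset.mem_coe.1 hb)).2
              have h1 : a.1.1 + m = w'.1 := congrArg Prod.fst ha'
              have h2 : b.1.1 + m = w'.1 := congrArg Prod.fst hb'
              have h3 : a.1.1 = b.1.1 := by omega
              exact Subtype.ext (Prod.ext h3 hab)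
            have hGcard : ((F.filter (fun t => g t = w')).image (fun t => t.1.2)).card
                = (F.filter (fun t => g t = w')).card :=
              Finset.card_image_of_injOn hGinj
            rw [← hGcard]
            refine hN (w'.1 - m) (D.center w'.2) hzE _ ?_
            intro Q hQ
            obtain ⟨t, htf, hteq⟩ := Finset.mem_image.1 hQ
            have htf' := Finset.mem_filter.1 htf
            have h1 : t.1.1 + m = w'.1 := congrArg Prod.fst htf'.2
            have h2 : t.1.1 = w'.1 - m := by omega
            constructor
            · rw [← hteq, ← h2]; exact t.2.1
            · have h3 := (hgW t).2.2
              have h4 : W t.1 = w'.2 := congrArg Prod.snd htf'.2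
              rw [← hteq, ← h2, ← h4]
              refine h3.trans ?_
              have : (0:ℝ) < (2:ℝ) ^ (-t.1.1) := WBaux.two_zpow_pos _
              nlinarith
        calc (F.filter (fun t => g t = w')).card • μH[(n:ℝ)] w'.2
            = ((F.filter (fun t => g t = w')).card : ℝ≥0∞) * μH[(n:ℝ)] w'.2 :=
              nsmul_eq_mul _ _
          _ ≤ (N:ℝ≥0∞) * μH[(n:ℝ)] w'.2 :=
              mul_le_mul_left (by exact_mod_cast Nat.cast_le.2 hcard) _
      -- step 3 : the witnesses are packed
      have step3 : ∑ w' ∈ F.image g, μH[(n:ℝ)] w'.2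
          ≤ (N₃:ℝ≥0∞) * (ENNReal.ofReal C₁' * (ENNReal.ofReal C₄ * μH[(n:ℝ)] Q₀)) := by
        have hQ₀0 : Q₀ ∈ D.cubes (k₀ + (0:ℕ)) := by simpa using hQ₀
        by_cases hQ₀E : Q₀ = E
        · -- everything is inside Q₀ = E
          have hprops : ∀ w' ∈ F.image g, w'.2 ∈ D.cubes w'.1 ∧
              (¬ LocalWHSA E D K₀ εc w'.1 w'.2) ∧ w'.2 ⊆ Q₀ := by
            intro w' hw'
            obtain ⟨t, htF, hgt⟩ := Finset.mem_image.1 hw'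
            rw [← hgt]
            exact ⟨(hgW t).1, (hgW t).2.1, by rw [hQ₀E]; exact WBaux.cube_subset D (hgW t).1⟩
          have hsum : ∑ w' ∈ F.image g, μH[(n:ℝ)] w'.2
              ≤ ENNReal.ofReal C₁ * μH[(n:ℝ)] Q₀ := by
            refine le_trans ?_ (hC₁ k₀ Q₀ hQ₀)
            rw [← Finset.sum_attach (F.image g) (fun w' => μH[(n:ℝ)] w'.2)]
            have hemb := fun x : {w' // w' ∈ F.image g} => hprops x.1 x.2
            calc ∑ x ∈ (F.image g).attach, μH[(n:ℝ)] x.1.2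
                = ∑ y ∈ (F.image g).attach.image (fun x => (⟨x.1, hemb x⟩ :
                    {p : ℤ × Set (ES n) // p.2 ∈ D.cubes p.1 ∧
                      ¬ LocalWHSA E D K₀ εc p.1 p.2 ∧ p.2 ⊆ Q₀})), μH[(n:ℝ)] y.1.2 := by
                  rw [Finset.sum_image]
                  intro a _ b _ hab
                  simp only [Subtype.mk.injEq] at hab
                  exact Subtype.ext hab
              _ ≤ _ := ENNReal.sum_le_tsum _
          refine hsum.trans ?_
          have h1 : ENNReal.ofReal C₁ ≤ ENNReal.ofReal C₁' :=
            ENNReal.ofReal_le_ofReal (le_max_left _ _)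
          have h2 : μH[(n:ℝ)] Q₀ ≤ ENNReal.ofReal C₄ * μH[(n:ℝ)] Q₀ := by
            refine le_mul_of_one_le_left zero_le ?_
            rw [show (1:ℝ≥0∞) = ENNReal.ofReal 1 by simp]
            exact ENNReal.ofReal_le_ofReal hC₄1
          calc ENNReal.ofReal C₁ * μH[(n:ℝ)] Q₀
              ≤ ENNReal.ofReal C₁' * (ENNReal.ofReal C₄ * μH[(n:ℝ)] Q₀) :=
                mul_le_mul' h1 h2
            _ ≤ (N₃:ℝ≥0∞) * (ENNReal.ofReal C₁' * (ENNReal.ofReal C₄ * μH[(n:ℝ)] Q₀)) := by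
                refine le_mul_of_one_le_left zero_le ?_
                exact_mod_cast Nat.one_le_cast.2 hN₃pos
        · -- Q₀ ≠ E : use ancestors at generation k₀
          have hganti : ∀ t : {p : ℤ × Set (ES n) // p.2 ∈ D.cubes p.1 ∧
              ¬ LocalBAUP E D (Real.sqrt ε) p.1 p.2 ∧ p.2 ⊆ Q₀}, k₀ ≤ t.1.1 + cgap :=
            fun t => WBaux.gap_lemma hE D hn0 hKg0 hKg hcgap t.2.1 hQ₀ t.2.2.2 hQ₀E
          have hAex : ∀ w : ℤ × Set (ES n), ∃ A' : Set (ES n),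
              (w.2 ∈ D.cubes w.1 ∧ k₀ ≤ w.1) → (A' ∈ D.cubes k₀ ∧ w.2 ⊆ A') := by
            intro w
            by_cases h : w.2 ∈ D.cubes w.1 ∧ k₀ ≤ w.1
            · rcases eq_or_lt_of_le h.2 with heq | hlt
              · exact ⟨w.2, fun _ => ⟨by rw [heq]; exact h.1, subset_rfl⟩⟩
              · obtain ⟨A', ⟨hA1, hA2⟩, _⟩ := D.parent w.1 w.2 h.1 k₀ hlt
                exact ⟨A', fun _ => ⟨hA1, hA2⟩⟩
            · exact ⟨E, fun hh => absurd hh h⟩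
          choose Af hAf using hAex
          have hIp : ∀ w' ∈ F.image g, (w'.2 ∈ D.cubes w'.1 ∧ k₀ ≤ w'.1) := by
            intro w' hw'
            obtain ⟨t, htF, hgt⟩ := Finset.mem_image.1 hw'
            constructor
            · rw [← hgt]; exact (hgW t).1
            · have h1 := hganti t
              have h2 : w'.1 = t.1.1 + m := by rw [← hgt]
              have h3 : (cgap:ℤ) ≤ m := by exact_mod_cast hmcg
              omega
          have hfib2 : ∑ w' ∈ F.image g, μH[(n:ℝ)] w'.2
              = ∑ A' ∈ (F.image g).image Af,
                  ∑ w' ∈ (F.image g).filter (fun w' => Af w' = A'), μH[(n:ℝ)] w'.2 :=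
            (Finset.sum_fiberwise_of_maps_to (fun w' hw' => Finset.mem_image_of_mem Af hw') _).symm
          rw [hfib2]
          -- the ancestors form a small family at generation k₀
          have hJcard : ((F.image g).image Af).card ≤ N₃ := by
            refine hN₃ k₀ (D.center Q₀) (WBaux.center_mem_E D hQ₀) _ ?_
            intro A' hA'
            obtain ⟨w', hw'I, hAw'⟩ := Finset.mem_image.1 hA'
            obtain ⟨t, htF, hgt⟩ := Finset.mem_image.1 hw'I
            have hIpw := hIp w' hw'I
            have hprops := hAf w' hIpw
            constructor
            · rw [← hAw']; exact hprops.1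
            · have hsk₀ : (0:ℝ) < (2:ℝ)^(-k₀) := WBaux.two_zpow_pos _
              have hd1 : dist (D.center (Af w')) (D.center w'.2) ≤ D.Cstar * 2 ^ (-k₀) := by
                refine (Metric.dist_le_diam_of_mem (WBaux.cube_bounded D hprops.1)
                  (D.center_mem _ _ hprops.1)
                  (hprops.2 (D.center_mem _ _ hIpw.1))).trans (WBaux.diam_le' D hprops.1)
              have hd2 : dist (D.center w'.2) (D.center t.1.2)
                  ≤ 11*D.Cstar*((2:ℝ)^cgap * 2 ^ (-k₀)) := by
                have h5 := (hgW t).2.2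
                have h4 : W t.1 = w'.2 := congrArg Prod.snd hgt
                have hzp : (2:ℝ) ^ (-t.1.1) ≤ (2:ℝ)^(cgap:ℤ) * 2 ^ (-k₀) := by
                  have h6 : (2:ℝ) ^ (-t.1.1) ≤ 2 ^ ((cgap:ℤ) - k₀) :=
                    zpow_le_zpow_right₀ one_le_two (by have := hganti t; omega)
                  rwa [sub_eq_add_neg, zpow_add₀ (two_ne_zero : (2:ℝ) ≠ 0)] at h6
                rw [dist_comm, ← h4]
                refine h5.trans ?_
                have h7 := mul_le_mul_of_nonneg_left hzp
                  (by positivity : (0:ℝ) ≤ 11*D.Cstar)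
                calc 11*D.Cstar * (2:ℝ)^(-t.1.1) ≤ 11*D.Cstar*((2:ℝ)^(cgap:ℤ) * 2^(-k₀)) := h7
                  _ = 11*D.Cstar*((2:ℝ)^cgap * 2^(-k₀)) := by rw [zpow_natCast]
              have hd3 : dist (D.center t.1.2) (D.center Q₀) ≤ D.Cstar * 2^(-k₀) := by
                refine (Metric.dist_le_diam_of_mem (WBaux.cube_bounded D hQ₀)
                  (t.2.2.2 (D.center_mem _ _ t.2.1)) (D.center_mem _ _ hQ₀)).trans
                  (WBaux.diam_le' D hQ₀)
              have htri := dist_triangle4 (D.center (Af w')) (D.center w'.2)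
                (D.center t.1.2) (D.center Q₀)
              rw [← hAw']
              nlinarith [hLge]
          -- each ancestor packet is controlled by the WHSA packing
          have hinnerA : ∀ A' ∈ (F.image g).image Af,
              ∑ w' ∈ (F.image g).filter (fun w' => Af w' = A'), μH[(n:ℝ)] w'.2
                ≤ ENNReal.ofReal C₁' * (ENNReal.ofReal C₄ * μH[(n:ℝ)] Q₀) := by
            intro A' hA'
            obtain ⟨w'₀, hw'₀I, hAw'₀⟩ := Finset.mem_image.1 hA'
            have hA'mem : A' ∈ D.cubes k₀ := by
              rw [← hAw'₀]; exact (hAf w'₀ (hIp w'₀ hw'₀I)).1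
            have hprops : ∀ w' ∈ (F.image g).filter (fun w' => Af w' = A'),
                w'.2 ∈ D.cubes w'.1 ∧ (¬ LocalWHSA E D K₀ εc w'.1 w'.2) ∧ w'.2 ⊆ A' := by
              intro w' hw'
              have hw'f := Finset.mem_filter.1 hw'
              obtain ⟨t, htF, hgt⟩ := Finset.mem_image.1 hw'f.1
              refine ⟨(hIp w' hw'f.1).1, ?_, ?_⟩
              · rw [← hgt]; exact (hgW t).2.1
              · rw [← hw'f.2]; exact (hAf w' (hIp w' hw'f.1)).2
            have hsum : ∑ w' ∈ (F.image g).filter (fun w' => Af w' = A'), μH[(n:ℝ)] w'.2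
                ≤ ENNReal.ofReal C₁ * μH[(n:ℝ)] A' := by
              refine le_trans ?_ (hC₁ k₀ A' hA'mem)
              rw [← Finset.sum_attach ((F.image g).filter (fun w' => Af w' = A'))
                (fun w' => μH[(n:ℝ)] w'.2)]
              have hemb := fun x : {w' // w' ∈ (F.image g).filter (fun w' => Af w' = A')} =>
                hprops x.1 x.2
              calc ∑ x ∈ ((F.image g).filter (fun w' => Af w' = A')).attach, μH[(n:ℝ)] x.1.2
                  = ∑ y ∈ ((F.image g).filter (fun w' => Af w' = A')).attach.image
                      (fun x => (⟨x.1, hemb x⟩ :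
                      {p : ℤ × Set (ES n) // p.2 ∈ D.cubes p.1 ∧
                        ¬ LocalWHSA E D K₀ εc p.1 p.2 ∧ p.2 ⊆ A'})), μH[(n:ℝ)] y.1.2 := by
                    rw [Finset.sum_image]
                    intro a _ b _ hab
                    simp only [Subtype.mk.injEq] at hab
                    exact Subtype.ext hab
                _ ≤ _ := ENNReal.sum_le_tsum _
            refine hsum.trans ?_
            have h1 : ENNReal.ofReal C₁ ≤ ENNReal.ofReal C₁' :=
              ENNReal.ofReal_le_ofReal (le_max_left _ _)
            have h2 : μH[(n:ℝ)] A' ≤ ENNReal.ofReal C₄ * μH[(n:ℝ)] Q₀ :=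
              hC₄ k₀ A' Q₀ hA'mem hQ₀0
            exact mul_le_mul' h1 h2
          calc ∑ A' ∈ (F.image g).image Af,
                ∑ w' ∈ (F.image g).filter (fun w' => Af w' = A'), μH[(n:ℝ)] w'.2
              ≤ ∑ _A' ∈ (F.image g).image Af,
                  ENNReal.ofReal C₁' * (ENNReal.ofReal C₄ * μH[(n:ℝ)] Q₀) :=
                Finset.sum_le_sum hinnerA
            _ = (((F.image g).image Af).card : ℝ≥0∞) *
                  (ENNReal.ofReal C₁' * (ENNReal.ofReal C₄ * μH[(n:ℝ)] Q₀)) := by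
                rw [Finset.sum_const, nsmul_eq_mul]
            _ ≤ (N₃:ℝ≥0∞) * (ENNReal.ofReal C₁' * (ENNReal.ofReal C₄ * μH[(n:ℝ)] Q₀)) :=
                mul_le_mul_left (by exact_mod_cast Nat.cast_le.2 hJcard) _
      -- assemble
      calc ∑ t ∈ F, μH[(n:ℝ)] t.1.2
          ≤ ENNReal.ofReal C₂ * ∑ t ∈ F, μH[(n:ℝ)] (g t).2 := step1
        _ ≤ ENNReal.ofReal C₂ * ((N:ℝ≥0∞) * ∑ w' ∈ F.image g, μH[(n:ℝ)] w'.2) :=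
            mul_le_mul_right step2 _
        _ ≤ ENNReal.ofReal C₂ * ((N:ℝ≥0∞) * ((N₃:ℝ≥0∞) *
              (ENNReal.ofReal C₁' * (ENNReal.ofReal C₄ * μH[(n:ℝ)] Q₀)))) :=
            mul_le_mul_right (mul_le_mul_right step3 _) _
        _ = X * μH[(n:ℝ)] Q₀ := by rw [hXdef]; ring
  refine ⟨main, ⟨min ε₀ 1, lt_min hε₀ one_pos, ?_⟩⟩
  intro ε hε hεlt
  have hε1 : ε < 1 := lt_of_lt_of_le hεlt (min_le_right _ _)
  have hεε₀ : ε < ε₀ := lt_of_lt_of_le hεlt (min_le_left _ _)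
  have hsq : ε^2 < ε₀ := lt_of_le_of_lt (by nlinarith) hεε₀
  obtain ⟨C, hC⟩ := main (ε^2) (by positivity) hsq
  refine ⟨C, ?_⟩
  have hrw : Real.sqrt (ε^2) = ε := Real.sqrt_sq hε.le
  rwa [hrw] at hC
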